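/- Let p be a prime, Λ = ℤ_p[[T]], and let E be an elementary Λ-module. Suppose there is an exact sequence of Λ-modules 0 → F₁ → Z → E → F₂ → 0 with F₁ and F₂ finite. Let f ∈ Λ be such that Z/fZ is finite. Then the cardinality of Z/fZ equals the cardinality of F₁/fF₁ times the cardinality of E/fE. -/

import Mathlib

open DirectSum

namespace IwasawaCardAux

open Submodule Function

/-! ### General module lemmas -/

section General

variable {R : Type*} [CommRing R] {M N : Type*} [AddCommGroup M] [Module R M]
  [AddCommGroup N] [Module R N]

theorem span_smul_top_eq_range (f : R) :
    (Ideal.span {f} • (⊤ : Submodule R M)) = LinearMap.range (LinearMap.lsmul R M f) := by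
  apply le_antisymm
  · refine Submodule.smul_le.2 fun r hr m _ => ?_
    obtain ⟨c, rfl⟩ := Ideal.mem_span_singleton.mp hr
    exact ⟨c • m, by rw [LinearMap.lsmul_apply, smul_smul, mul_comm]⟩
  · rintro _ ⟨y, rfl⟩
    exact Submodule.smul_mem_smul (Ideal.mem_span_singleton_self f) trivial

theorem smul_top_le_comap (π : M →ₗ[R] N) (I : Ideal R) :
    I • (⊤ : Submodule R M) ≤ Submodule.comap π (I • ⊤) :=
  Submodule.smul_le.2 fun r hr m _ => by
    simp only [Submodule.mem_comap, map_smul]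
    exact Submodule.smul_mem_smul hr trivial

theorem finite_of_finite_quot (S : Submodule R M) (h1 : Finite (M ⧸ S)) (h2 : Finite S) :
    Finite M := by
  have hq : Finite (M ⧸ S.toAddSubgroup) := h1
  have hs : Finite S.toAddSubgroup := h2
  exact Finite.of_equiv _
    (AddSubgroup.addGroupEquivQuotientProdAddSubgroup (s := S.toAddSubgroup)).symm

theorem card_ker_eq_card_coker [Finite M] (u : M →ₗ[R] M) :
    Nat.card (LinearMap.ker u) = Nat.card (M ⧸ LinearMap.range u) := by
  have h1 := Submodule.card_eq_card_quotient_mul_card (LinearMap.ker u)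
  have h2 := Submodule.card_eq_card_quotient_mul_card (LinearMap.range u)
  have h3 : Nat.card (M ⧸ LinearMap.ker u) = Nat.card (LinearMap.range u) :=
    Nat.card_congr (LinearMap.quotKerEquivRange u).toEquiv
  have h4 : 0 < Nat.card (LinearMap.range u) := Nat.card_pos
  apply Nat.eq_of_mul_eq_mul_left h4
  calc Nat.card (LinearMap.range u) * Nat.card (LinearMap.ker u)
      = Nat.card (LinearMap.ker u) * Nat.card (M ⧸ LinearMap.ker u) := by rw [h3, mul_comm]
    _ = Nat.card M := h1.symm
    _ = Nat.card (LinearMap.range u) * Nat.card (M ⧸ LinearMap.range u) := h2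
end General

/-! ### Abstract counting lemmas for the exact sequence -/

section Abstract

variable {R : Type*} [CommRing R] {Z E F₁ F₂ : Type*}
  [AddCommGroup Z] [Module R Z] [AddCommGroup E] [Module R E]
  [AddCommGroup F₁] [Module R F₁]
  [AddCommGroup F₂] [Module R F₂]

/-- If `Z → E → F₂ → 0` is exact with `F₂` finite and `Z/fZ` finite, then `E/fE` is finite. -/
theorem finE [Finite F₂]
    (β : Z →ₗ[R] E) (γ : E →ₗ[R] F₂) (hγ : Function.Surjective γ)
    (hβγ : LinearMap.range β = LinearMap.ker γ) (f : R)
    (hfin : Finite (Z ⧸ (Ideal.span {f} • (⊤ : Submodule R Z)))) :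
    Finite (E ⧸ (Ideal.span {f} • (⊤ : Submodule R E))) := by
  set AZ : Submodule R Z := Ideal.span {f} • ⊤ with hAZ
  set AE : Submodule R E := Ideal.span {f} • ⊤ with hAE
  set AF₂ : Submodule R F₂ := Ideal.span {f} • ⊤ with hAF₂
  set Cc : Submodule R Z := Submodule.comap β AE with hCc
  set π : Z →ₗ[R] E ⧸ AE := AE.mkQ ∘ₗ β with hπ
  have hkerπ : LinearMap.ker π = Cc := by
    rw [hπ, LinearMap.ker_comp, Submodule.ker_mkQ]
  have hAZCc : AZ ≤ Cc := smul_top_le_comap β _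
  have hq : Function.Surjective (Submodule.mapQ AZ Cc LinearMap.id hAZCc) := by
    intro y
    obtain ⟨z, rfl⟩ := Submodule.Quotient.mk_surjective _ y
    exact ⟨Submodule.Quotient.mk z, by rw [Submodule.mapQ_apply]; rfl⟩
  have hfinCc : Finite (Z ⧸ Cc) := Finite.of_surjective _ hq
  have e1 : (Z ⧸ Cc) ≃ₗ[R] LinearMap.range π :=
    (Submodule.quotEquivOfEq Cc (LinearMap.ker π) hkerπ.symm).trans π.quotKerEquivRange
  have hfinrange : Finite (LinearMap.range π) := Finite.of_equiv _ e1.toEquiv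
  have h3 : LinearMap.range π = Submodule.map AE.mkQ (AE ⊔ LinearMap.range β) := by
    rw [hπ, LinearMap.range_comp, Submodule.map_sup, Submodule.mkQ_map_self, bot_sup_eq]
  set ρ : E →ₗ[R] F₂ ⧸ AF₂ := AF₂.mkQ ∘ₗ γ with hρ
  have hρs : Function.Surjective ρ := by
    intro y
    obtain ⟨t, rfl⟩ := Submodule.Quotient.mk_surjective _ y
    obtain ⟨e, rfl⟩ := hγ t
    exact ⟨e, rfl⟩
  have hkerρ : LinearMap.ker ρ = AE ⊔ LinearMap.range β := by
    rw [hρ, LinearMap.ker_comp, Submodule.ker_mkQ]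
    apply le_antisymm
    · intro e he
      rw [Submodule.mem_comap] at he
      rw [hAF₂, span_smul_top_eq_range] at he
      obtain ⟨t, ht⟩ := he
      obtain ⟨e', rfl⟩ := hγ t
      have hker : e - f • e' ∈ LinearMap.ker γ := by
        rw [LinearMap.mem_ker, map_sub, map_smul, sub_eq_zero]
        exact ht.symm
      rw [← hβγ] at hker
      have h2 : f • e' ∈ AE := by
        rw [hAE, span_smul_top_eq_range]; exact ⟨e', rfl⟩
      have hdec : e = f • e' + (e - f • e') := by abel
      rw [hdec]
      exact Submodule.add_mem _ (Submodule.mem_sup_left h2) (Submodule.mem_sup_right hker)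
    · apply sup_le
      · rw [hAE, hAF₂]; exact smul_top_le_comap γ _
      · rintro _ ⟨z, rfl⟩
        have hz : γ (β z) = 0 := by
          rw [← LinearMap.mem_ker, ← hβγ]; exact ⟨z, rfl⟩
        rw [Submodule.mem_comap, hz]
        exact zero_mem _
  have e2 : ((E ⧸ AE) ⧸ LinearMap.range π) ≃ₗ[R] F₂ ⧸ AF₂ :=
    (Submodule.quotEquivOfEq _ _ h3).trans
      ((Submodule.quotientQuotientEquivQuotient AE (AE ⊔ LinearMap.range β) le_sup_left).trans
      ((Submodule.quotEquivOfEq _ _ hkerρ.symm).trans (ρ.quotKerEquivOfSurjective hρs)))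
  have hFq : Finite (F₂ ⧸ AF₂) :=
    Finite.of_surjective _ (Submodule.Quotient.mk_surjective AF₂)
  have hfq : Finite ((E ⧸ AE) ⧸ LinearMap.range π) := Finite.of_equiv _ e2.symm.toEquiv
  exact finite_of_finite_quot (LinearMap.range π) hfq hfinrange

/-- Abstract core: the order identity, given that `f` acts injectively on `E`. -/
theorem abstract_main [Finite F₁] [Finite F₂]
    (α : F₁ →ₗ[R] Z) (β : Z →ₗ[R] E) (γ : E →ₗ[R] F₂)
    (hα : Function.Injective α) (hγ : Function.Surjective γ)
    (hαβ : LinearMap.range α = LinearMap.ker β)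
    (hβγ : LinearMap.range β = LinearMap.ker γ) (f : R)
    (hfE : ∀ e : E, f • e = 0 → e = 0) :
    Nat.card (Z ⧸ (Ideal.span {f} • (⊤ : Submodule R Z))) =
      Nat.card (F₁ ⧸ (Ideal.span {f} • (⊤ : Submodule R F₁))) *
      Nat.card (E ⧸ (Ideal.span {f} • (⊤ : Submodule R E))) := by
  set AZ : Submodule R Z := Ideal.span {f} • ⊤ with hAZ
  set AE : Submodule R E := Ideal.span {f} • ⊤ with hAE
  set AF₁ : Submodule R F₁ := Ideal.span {f} • ⊤ with hAF₁
  set AF₂ : Submodule R F₂ := Ideal.span {f} • ⊤ with hAF₂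
  have hAZr : AZ = LinearMap.range (LinearMap.lsmul R Z f) := span_smul_top_eq_range f
  have hAEr : AE = LinearMap.range (LinearMap.lsmul R E f) := span_smul_top_eq_range f
  have hAF₁r : AF₁ = LinearMap.range (LinearMap.lsmul R F₁ f) := span_smul_top_eq_range f
  have hAF₂r : AF₂ = LinearMap.range (LinearMap.lsmul R F₂ f) := span_smul_top_eq_range f
  set B : Submodule R Z := AZ ⊔ LinearMap.range α with hB
  set Cc : Submodule R Z := Submodule.comap β AE with hCc
  have hβα0 : ∀ w : F₁, β (α w) = 0 := by
    intro w
    rw [← LinearMap.mem_ker, ← hαβ]; exact ⟨w, rfl⟩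
  have hγβ0 : ∀ z : Z, γ (β z) = 0 := by
    intro z
    rw [← LinearMap.mem_ker, ← hβγ]; exact ⟨z, rfl⟩
  have hB1 : AZ ≤ B := le_sup_left
  have hBC : B ≤ Cc := by
    apply sup_le
    · exact smul_top_le_comap β _
    · rintro _ ⟨w, rfl⟩
      rw [Submodule.mem_comap, hβα0 w]
      exact zero_mem _
  -- Step (i) and (ii): tower identities
  have Hi := Submodule.card_quotient_mul_card_quotient B AZ hB1
  have Hii := Submodule.card_quotient_mul_card_quotient Cc B hBC
  -- Step (a): the bottom layer is F₁ ⧸ f F₁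
  set ψ : F₁ →ₗ[R] Z ⧸ AZ := AZ.mkQ ∘ₗ α with hψ
  have hψ_apply : ∀ x : F₁, ψ x = Submodule.Quotient.mk (α x) := fun x => rfl
  have hkerψ : LinearMap.ker ψ = AF₁ := by
    apply le_antisymm
    · intro x hx
      rw [LinearMap.mem_ker, hψ_apply, Submodule.Quotient.mk_eq_zero] at hx
      rw [hAZr] at hx
      obtain ⟨z, hz⟩ := hx
      simp only [LinearMap.lsmul_apply] at hz
      have h1 : f • β z = 0 := by
        rw [← map_smul, hz, hβα0]
      have h2 : z ∈ LinearMap.range α := by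
        rw [hαβ, LinearMap.mem_ker]
        exact hfE _ h1
      obtain ⟨w, rfl⟩ := h2
      have h4 : α x = α (f • w) := by rw [map_smul, hz]
      rw [hAF₁r]
      exact ⟨w, by simpa using (hα h4).symm⟩
    · intro x hx
      rw [hAF₁r] at hx
      obtain ⟨w, hw⟩ := hx
      simp only [LinearMap.lsmul_apply] at hw
      rw [LinearMap.mem_ker, hψ_apply, Submodule.Quotient.mk_eq_zero, ← hw, map_smul, hAZr]
      exact ⟨α w, rfl⟩
  have hrψ : LinearMap.range ψ = Submodule.map AZ.mkQ B := by
    rw [hψ, LinearMap.range_comp, hB, Submodule.map_sup, Submodule.mkQ_map_self, bot_sup_eq]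
  have e_a : (F₁ ⧸ AF₁) ≃ₗ[R] Submodule.map AZ.mkQ B :=
    (Submodule.quotEquivOfEq AF₁ (LinearMap.ker ψ) hkerψ.symm).trans
      (ψ.quotKerEquivRange.trans (LinearEquiv.ofEq _ _ hrψ))
  have cardA : Nat.card (Submodule.map AZ.mkQ B) = Nat.card (F₁ ⧸ AF₁) :=
    (Nat.card_congr e_a.toEquiv).symm
  -- Step (b): Nat.card (E ⧸ AE) = Nat.card (F₂ ⧸ AF₂) * Nat.card (Z ⧸ Cc)
  set π : Z →ₗ[R] E ⧸ AE := AE.mkQ ∘ₗ β with hπ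
  have hkerπ : LinearMap.ker π = Cc := by
    rw [hπ, LinearMap.ker_comp, Submodule.ker_mkQ]
  have e1 : (Z ⧸ Cc) ≃ₗ[R] LinearMap.range π :=
    (Submodule.quotEquivOfEq Cc (LinearMap.ker π) hkerπ.symm).trans π.quotKerEquivRange
  have cardZC : Nat.card (LinearMap.range π) = Nat.card (Z ⧸ Cc) :=
    (Nat.card_congr e1.toEquiv).symm
  have h3 : LinearMap.range π = Submodule.map AE.mkQ (AE ⊔ LinearMap.range β) := by
    rw [hπ, LinearMap.range_comp, Submodule.map_sup, Submodule.mkQ_map_self, bot_sup_eq]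
  set ρ : E →ₗ[R] F₂ ⧸ AF₂ := AF₂.mkQ ∘ₗ γ with hρ
  have hρs : Function.Surjective ρ := by
    intro y
    obtain ⟨t, rfl⟩ := Submodule.Quotient.mk_surjective _ y
    obtain ⟨e, rfl⟩ := hγ t
    exact ⟨e, rfl⟩
  have hkerρ : LinearMap.ker ρ = AE ⊔ LinearMap.range β := by
    rw [hρ, LinearMap.ker_comp, Submodule.ker_mkQ]
    apply le_antisymm
    · intro e he
      rw [Submodule.mem_comap] at he
      rw [hAF₂, span_smul_top_eq_range] at he
      obtain ⟨t, ht⟩ := he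
      obtain ⟨e', rfl⟩ := hγ t
      have hker : e - f • e' ∈ LinearMap.ker γ := by
        rw [LinearMap.mem_ker, map_sub, map_smul, sub_eq_zero]
        exact ht.symm
      rw [← hβγ] at hker
      have h2 : f • e' ∈ AE := by
        rw [hAEr]; exact ⟨e', rfl⟩
      have hdec : e = f • e' + (e - f • e') := by abel
      rw [hdec]
      exact Submodule.add_mem _ (Submodule.mem_sup_left h2) (Submodule.mem_sup_right hker)
    · apply sup_le
      · rw [hAE, hAF₂]; exact smul_top_le_comap γ _
      · rintro _ ⟨z, rfl⟩
        rw [Submodule.mem_comap, hγβ0 z]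
        exact zero_mem _
  have e2 : ((E ⧸ AE) ⧸ LinearMap.range π) ≃ₗ[R] F₂ ⧸ AF₂ :=
    (Submodule.quotEquivOfEq _ _ h3).trans
      ((Submodule.quotientQuotientEquivQuotient AE (AE ⊔ LinearMap.range β) le_sup_left).trans
      ((Submodule.quotEquivOfEq _ _ hkerρ.symm).trans (ρ.quotKerEquivOfSurjective hρs)))
  have cardE2 : Nat.card (E ⧸ AE) = Nat.card (F₂ ⧸ AF₂) * Nat.card (Z ⧸ Cc) := by
    have := Submodule.card_eq_card_quotient_mul_card (LinearMap.range π) (M := E ⧸ AE)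
    rw [cardZC, Nat.card_congr e2.toEquiv] at this
    rw [this, mul_comm]
  -- Step (c): the middle layer is the f-torsion of F₂
  set uE : E →ₗ[R] E := LinearMap.lsmul R E f with huE
  set uF₂ : F₂ →ₗ[R] F₂ := LinearMap.lsmul R F₂ f with huF₂
  have huE_apply : ∀ e : E, uE e = f • e := fun e => rfl
  have huF₂_apply : ∀ t : F₂, uF₂ t = f • t := fun t => rfl
  have hinj : Function.Injective uE := by
    intro a b hab
    rw [huE_apply, huE_apply] at hab
    have : f • (a - b) = 0 := by rw [smul_sub, hab, sub_self]
    have := hfE _ this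
    rwa [sub_eq_zero] at this
  set eqv : E ≃ₗ[R] LinearMap.range uE := LinearEquiv.ofInjective uE hinj with heqv
  have key : ∀ y : LinearMap.range uE, uE (eqv.symm y) = (y : E) := by
    simp only [heqv]
    intro y
    conv_rhs => rw [← LinearEquiv.apply_symm_apply (LinearEquiv.ofInjective uE hinj) y]
    exact (LinearEquiv.ofInjective_apply uE _).symm
  have hCcmem : ∀ z : Cc, β (↑z : Z) ∈ LinearMap.range uE := by
    intro z
    have h1 : β (↑z : Z) ∈ AE := z.2
    rwa [hAEr] at h1
  set δ : Cc →ₗ[R] F₂ :=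
    γ ∘ₗ (eqv.symm.toLinearMap) ∘ₗ
      LinearMap.codRestrict (LinearMap.range uE) (β ∘ₗ Cc.subtype) (fun z => hCcmem z) with hδ
  have hδ_apply : ∀ z : Cc, δ z = γ (eqv.symm ⟨β (↑z : Z), hCcmem z⟩) := fun z => rfl
  have hrδ : LinearMap.range δ = LinearMap.ker uF₂ := by
    apply le_antisymm
    · rintro _ ⟨z, rfl⟩
      rw [LinearMap.mem_ker, hδ_apply, huF₂_apply, ← map_smul, ← huE_apply, key]
      exact hγβ0 _
    · intro t ht
      rw [LinearMap.mem_ker, huF₂_apply] at ht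
      obtain ⟨e, rfl⟩ := hγ t
      have h1 : f • e ∈ LinearMap.range β := by
        rw [hβγ, LinearMap.mem_ker, map_smul, ht]
      obtain ⟨z₀, hz₀⟩ := h1
      have hz₀C : z₀ ∈ Cc := by
        rw [hCc, Submodule.mem_comap, hAEr, hz₀]
        exact ⟨e, rfl⟩
      refine ⟨⟨z₀, hz₀C⟩, ?_⟩
      rw [hδ_apply]
      congr 1
      apply hinj
      rw [key]
      simp only [huE_apply]
      exact hz₀
  have hkδ : LinearMap.ker δ = Submodule.comap Cc.subtype B := by
    apply le_antisymm
    · intro z hz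
      rw [LinearMap.mem_ker, hδ_apply] at hz
      have h1 : eqv.symm ⟨β (↑z : Z), hCcmem z⟩ ∈ LinearMap.range β := by
        rw [hβγ, LinearMap.mem_ker]; exact hz
      obtain ⟨w, hw⟩ := h1
      have hfe : f • (eqv.symm ⟨β (↑z : Z), hCcmem z⟩) = β (↑z : Z) := by
        rw [← huE_apply, key]
      have h2 : β ((↑z : Z) - f • w) = 0 := by
        rw [map_sub, map_smul, hw, hfe, sub_self]
      have h3 : (↑z : Z) - f • w ∈ LinearMap.range α := by
        rw [hαβ, LinearMap.mem_ker]; exact h2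
      have h5 : (↑z : Z) ∈ B := by
        have h4 : (↑z : Z) = f • w + ((↑z : Z) - f • w) := by abel
        rw [h4]
        exact Submodule.add_mem _
          (Submodule.mem_sup_left (by rw [hAZr]; exact ⟨w, rfl⟩))
          (Submodule.mem_sup_right h3)
      exact h5
    · intro z hz
      rw [Submodule.mem_comap, hB] at hz
      obtain ⟨y, hy, w', hw', hsum⟩ := Submodule.mem_sup.mp hz
      rw [hAZr] at hy
      obtain ⟨z₁, hz₁⟩ := hy
      simp only [LinearMap.lsmul_apply] at hz₁
      obtain ⟨x, rfl⟩ := hw'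
      rw [LinearMap.mem_ker, hδ_apply]
      have hsum' : y + α x = (↑z : Z) := hsum
      have hβz : β (↑z : Z) = uE (β z₁) := by
        calc β (↑z : Z) = β (y + α x) := by rw [hsum']
          _ = β y + β (α x) := map_add _ _ _
          _ = β y + 0 := by rw [hβα0]
          _ = β (f • z₁) := by rw [add_zero, hz₁]
          _ = f • β z₁ := map_smul _ _ _
          _ = uE (β z₁) := (huE_apply _).symm
      have heq : eqv.symm ⟨β (↑z : Z), hCcmem z⟩ = β z₁ := by
        apply hinj
        rw [key]
        exact hβz
      rw [heq]
      exact hγβ0 z₁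
  set θ : Cc →ₗ[R] Z ⧸ B := B.mkQ ∘ₗ Cc.subtype with hθ
  have hkθ : LinearMap.ker θ = Submodule.comap Cc.subtype B := by
    rw [hθ, LinearMap.ker_comp, Submodule.ker_mkQ]
  have hrθ : LinearMap.range θ = Submodule.map B.mkQ Cc := by
    rw [hθ, LinearMap.range_comp, Submodule.range_subtype]
  have e_c : Submodule.map B.mkQ Cc ≃ₗ[R] LinearMap.ker uF₂ :=
    (LinearEquiv.ofEq _ _ hrθ.symm).trans
      ((θ.quotKerEquivRange.symm).trans
      ((Submodule.quotEquivOfEq (LinearMap.ker θ) (LinearMap.ker δ)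
        (hkθ.trans hkδ.symm)).trans
      (δ.quotKerEquivRange.trans (LinearEquiv.ofEq _ _ hrδ))))
  -- Step (d): torsion and cotorsion of the finite module F₂ have the same size
  have cardD : Nat.card (LinearMap.ker uF₂) = Nat.card (F₂ ⧸ AF₂) :=
    (card_ker_eq_card_coker uF₂).trans
      (Nat.card_congr (Submodule.quotEquivOfEq _ _ hAF₂r.symm).toEquiv)
  have cardC : Nat.card (Submodule.map B.mkQ Cc) = Nat.card (F₂ ⧸ AF₂) :=
    (Nat.card_congr e_c.toEquiv).trans cardD
  -- Assembly
  rw [← Hi, ← Hii, cardA, cardC, cardE2]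

end Abstract

/-! ### p-adic power series lemmas -/

section Padic

variable {p : ℕ} [hp : Fact p.Prime]

local notation "Λ" => PowerSeries ℤ_[p]

noncomputable def phi : Λ →+* PowerSeries (ZMod p) :=
  PowerSeries.map (PadicInt.toZMod)

theorem phi_eq_zero_iff {x : Λ} : phi x = 0 ↔ ((p : ℕ) : Λ) ∣ x := by
  constructor
  · intro h
    have hc : ∀ n, ((p : ℕ) : ℤ_[p]) ∣ PowerSeries.coeff (R := ℤ_[p]) n x := by
      intro n
      have h0 : PadicInt.toZMod (PowerSeries.coeff (R := ℤ_[p]) n x) = 0 := by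
        have := congrArg (PowerSeries.coeff (R := ZMod p) n) h
        rwa [phi, PowerSeries.coeff_map, map_zero] at this
      have h2 : PowerSeries.coeff (R := ℤ_[p]) n x ∈ RingHom.ker (PadicInt.toZMod (p := p)) := h0
      rwa [PadicInt.ker_toZMod, PadicInt.maximalIdeal_eq_span_p,
        Ideal.mem_span_singleton] at h2
    choose d hd using hc
    refine ⟨PowerSeries.mk d, ?_⟩
    have hCp : ((p : ℕ) : Λ) = PowerSeries.C (R := ℤ_[p]) ((p : ℕ) : ℤ_[p]) :=
      (map_natCast (PowerSeries.C (R := ℤ_[p])) p).symm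
    ext n
    rw [hCp, PowerSeries.coeff_C_mul, PowerSeries.coeff_mk]
    exact hd n
  · rintro ⟨y, rfl⟩
    rw [map_mul]
    have hp0 : phi ((p : ℕ) : Λ) = 0 := by
      rw [map_natCast]
      have : ((p : ℕ) : PowerSeries (ZMod p)) = PowerSeries.C (R := ZMod p) ((p : ℕ) : ZMod p) :=
        (map_natCast (PowerSeries.C (R := ZMod p)) p).symm
      rw [this, ZMod.natCast_self, map_zero]
    rw [hp0, zero_mul]

theorem prime_p_ps : Prime ((p : ℕ) : Λ) := by
  refine ⟨?_, ?_, ?_⟩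
  · intro h
    have := congrArg (PowerSeries.constantCoeff (R := ℤ_[p])) h
    rw [map_natCast, map_zero] at this
    exact (Nat.cast_ne_zero.mpr hp.out.ne_zero : ((p:ℕ):ℤ_[p]) ≠ 0) this
  · intro h
    rw [PowerSeries.isUnit_iff_constantCoeff, map_natCast] at h
    exact PadicInt.p_nonunit h
  · intro a b hab
    have h1 : phi (a * b) = 0 := phi_eq_zero_iff.mpr hab
    rw [map_mul] at h1
    rcases mul_eq_zero.mp h1 with h | h
    · exact Or.inl (phi_eq_zero_iff.mp h)
    · exact Or.inr (phi_eq_zero_iff.mp h)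

theorem p_pow_dvd {k a : ℕ} {x : Λ} (h : ((p : ℕ) : Λ) ^ k ∣ PowerSeries.X ^ a * x) :
    ((p : ℕ) : Λ) ^ k ∣ x := by
  refine prime_p_ps.pow_dvd_of_dvd_mul_left k ?_ h
  intro hd
  have h0 : phi (PowerSeries.X ^ a) = 0 := phi_eq_zero_iff.mpr hd
  rw [map_pow, phi, PowerSeries.map_X] at h0
  exact pow_ne_zero a PowerSeries.X_ne_zero h0

theorem P_dvd (P : Polynomial ℤ_[p]) (hm : P.Monic) :
    ∀ (c : ℕ) (x y : Λ), ((p : ℕ) : Λ) ^ c * x = (P : Λ) * y → (P : Λ) ∣ x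
  | 0, x, y, h => ⟨y, by simpa using h⟩
  | c + 1, x, y, h => by
    have hphiP : phi (P : Λ) ≠ 0 := by
      intro h0
      have := congrArg (PowerSeries.coeff (R := ZMod p) P.natDegree) h0
      rw [phi, PowerSeries.coeff_map, Polynomial.coeff_coe, hm.coeff_natDegree,
        map_one, map_zero] at this
      exact one_ne_zero this
    have hy : phi y = 0 := by
      have hc := congrArg phi h
      have hp0 : phi ((p : ℕ) : Λ) = 0 := phi_eq_zero_iff.mpr dvd_rfl
      rw [map_mul, map_mul, map_pow, hp0, zero_pow (Nat.succ_ne_zero c), zero_mul] at hc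
      exact (mul_eq_zero.mp hc.symm).resolve_left hphiP
    obtain ⟨y', rfl⟩ := phi_eq_zero_iff.mp hy
    have hpne : ((p : ℕ) : Λ) ≠ 0 := prime_p_ps.ne_zero
    have hcancel : ((p : ℕ) : Λ) ^ c * x = (P : Λ) * y' := by
      apply mul_left_cancel₀ hpne
      calc ((p : ℕ) : Λ) * (((p : ℕ) : Λ) ^ c * x) = ((p : ℕ) : Λ) ^ (c + 1) * x := by ring
        _ = (P : Λ) * (((p : ℕ) : Λ) * y') := h
        _ = ((p : ℕ) : Λ) * ((P : Λ) * y') := by ring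
    exact P_dvd P hm c x y' hcancel

theorem exists_pow_mem (J : Ideal Λ) (hfin : Finite (Λ ⧸ J)) (t : Λ)
    (hu : ∀ m : ℕ, 1 ≤ m → IsUnit (1 - t ^ m)) : ∃ n : ℕ, t ^ n ∈ J := by
  obtain ⟨a, b, hab, h⟩ := Finite.exists_ne_map_eq_of_infinite
    (fun n : ℕ => (Ideal.Quotient.mk J (t ^ n)))
  wlog hlt : a < b generalizing a b
  · exact this b a hab.symm h.symm (by omega)
  have hmem : t ^ a - t ^ b ∈ J := by
    rwa [Ideal.Quotient.eq] at h
  have hfact : t ^ a - t ^ b = t ^ a * (1 - t ^ (b - a)) := by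
    rw [mul_sub, mul_one, ← pow_add, Nat.add_sub_cancel' hlt.le]
  obtain ⟨u, hu'⟩ := hu (b - a) (by omega)
  have h1 : (1 - t ^ (b - a)) * (↑u⁻¹ : Λ) = 1 := by
    rw [← hu', Units.mul_inv]
  have h2 : (t ^ a - t ^ b) * (↑u⁻¹ : Λ) ∈ J := J.mul_mem_right _ hmem
  rw [hfact, mul_assoc, h1, mul_one] at h2
  exact ⟨a, h2⟩

theorem isUnit_one_sub_X_pow (m : ℕ) (hm : 1 ≤ m) :
    IsUnit (1 - (PowerSeries.X : Λ) ^ m) := by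
  rw [PowerSeries.isUnit_iff_constantCoeff, map_sub, map_one, map_pow,
    PowerSeries.constantCoeff_X, zero_pow (by omega : m ≠ 0), sub_zero]
  exact isUnit_one

theorem isUnit_one_sub_p_pow (m : ℕ) (hm : 1 ≤ m) :
    IsUnit (1 - ((p : ℕ) : Λ) ^ m) := by
  rw [PowerSeries.isUnit_iff_constantCoeff, map_sub, map_one, map_pow, map_natCast]
  refine IsLocalRing.isUnit_one_sub_self_of_mem_nonunits _ ?_
  have hmem : ((p : ℕ) : ℤ_[p]) ^ m ∈ IsLocalRing.maximalIdeal ℤ_[p] := by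
    rw [PadicInt.maximalIdeal_eq_span_p]
    exact Ideal.pow_mem_of_mem _ (Ideal.mem_span_singleton_self _) m (by omega)
  exact hmem

theorem component_inj (gj f : Λ)
    (hg : (∃ k : ℕ, 1 ≤ k ∧ gj = ((p : ℕ) : Λ) ^ k) ∨
      (∃ P : Polynomial ℤ_[p], P.Monic ∧ (∀ i < P.natDegree, ((p:ℕ) : ℤ_[p]) ∣ P.coeff i) ∧
        gj = (P : Λ)))
    (hfin : Finite (Λ ⧸ (Ideal.span {gj} ⊔ Ideal.span {f}))) {x : Λ}
    (hx : f * x ∈ Ideal.span {gj}) : x ∈ Ideal.span {gj} := by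
  have hspan : Ideal.span {gj} ⊔ Ideal.span {f} = Ideal.span {gj, f} := by
    rw [← Ideal.span_union, Set.singleton_union]
  rw [Ideal.mem_span_singleton] at hx ⊢
  obtain ⟨w, hw⟩ := hx
  rcases hg with ⟨k, hk, rfl⟩ | ⟨P, hPm, -, rfl⟩
  · obtain ⟨a, ha⟩ := exists_pow_mem _ hfin PowerSeries.X isUnit_one_sub_X_pow
    rw [hspan, Ideal.mem_span_pair] at ha
    obtain ⟨u, v, huv⟩ := ha
    have hdvd : ((p : ℕ) : Λ) ^ k ∣ PowerSeries.X ^ a * x := by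
      refine ⟨u * x + v * w, ?_⟩
      calc PowerSeries.X ^ a * x = (u * ((p : ℕ) : Λ) ^ k + v * f) * x := by rw [huv]
        _ = u * x * ((p : ℕ) : Λ) ^ k + v * (f * x) := by ring
        _ = u * x * ((p : ℕ) : Λ) ^ k + v * (((p : ℕ) : Λ) ^ k * w) := by rw [hw]
        _ = ((p : ℕ) : Λ) ^ k * (u * x + v * w) := by ring
    exact p_pow_dvd hdvd
  · obtain ⟨c, hc⟩ := exists_pow_mem _ hfin ((p : ℕ) : Λ) isUnit_one_sub_p_pow
    rw [hspan, Ideal.mem_span_pair] at hc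
    obtain ⟨u, v, huv⟩ := hc
    refine P_dvd P hPm c x (u * x + v * w) ?_
    calc ((p : ℕ) : Λ) ^ c * x = (u * (P : Λ) + v * f) * x := by rw [huv]
      _ = (P : Λ) * (u * x) + v * (f * x) := by ring
      _ = (P : Λ) * (u * x) + v * ((P : Λ) * w) := by rw [hw]
      _ = (P : Λ) * (u * x + v * w) := by ring

end Padic

end IwasawaCardAux


open IwasawaCardAux in
set_option maxHeartbeats 1000000 in
/-- **Theorem on orders of quotients under pseudo-isomorphism.**
If `0 → F₁ → Z → E → F₂ → 0` is an exact sequence of `Λ = ℤ_p[[T]]`-modules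
with `F₁, F₂` finite and `E = ⊕ Λ/(g_j)` elementary (each `g_j` a power of `p`
or a distinguished polynomial), and `f ∈ Λ` is such that `Z/fZ` is finite, then
`#(Z/fZ) = #(F₁/fF₁) · #(E/fE)`. -/
theorem card_quotient_eq_of_pseudo_isomorphism (p : ℕ) [Fact p.Prime]
    (ι : Type*) [Fintype ι] [DecidableEq ι]
    (g : ι → PowerSeries ℤ_[p])
    (hg : ∀ j, (∃ k : ℕ, 1 ≤ k ∧ g j = (p : PowerSeries ℤ_[p]) ^ k) ∨
      (∃ P : Polynomial ℤ_[p], P.Monic ∧ (∀ i < P.natDegree, (p : ℤ_[p]) ∣ P.coeff i) ∧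
        g j = (P : PowerSeries ℤ_[p])))
    (Z F₁ F₂ : Type*)
    [AddCommGroup Z] [Module (PowerSeries ℤ_[p]) Z]
    [AddCommGroup F₁] [Module (PowerSeries ℤ_[p]) F₁] [Finite F₁]
    [AddCommGroup F₂] [Module (PowerSeries ℤ_[p]) F₂] [Finite F₂]
    (α : F₁ →ₗ[PowerSeries ℤ_[p]] Z)
    (β : Z →ₗ[PowerSeries ℤ_[p]] (⨁ j, PowerSeries ℤ_[p] ⧸ Ideal.span {g j}))
    (γ : (⨁ j, PowerSeries ℤ_[p] ⧸ Ideal.span {g j}) →ₗ[PowerSeries ℤ_[p]] F₂)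
    (hα : Function.Injective α) (hγ : Function.Surjective γ)
    (hαβ : LinearMap.range α = LinearMap.ker β)
    (hβγ : LinearMap.range β = LinearMap.ker γ)
    (f : PowerSeries ℤ_[p])
    (hfin : Finite (Z ⧸ (Ideal.span {f} • (⊤ : Submodule (PowerSeries ℤ_[p]) Z)))) :
    Nat.card (Z ⧸ (Ideal.span {f} • (⊤ : Submodule (PowerSeries ℤ_[p]) Z))) =
      Nat.card (F₁ ⧸ (Ideal.span {f} • (⊤ : Submodule (PowerSeries ℤ_[p]) F₁))) *
      Nat.card (@HasQuotient.Quotient (⨁ j, PowerSeries ℤ_[p] ⧸ Ideal.span {g j}) _ Submodule.hasQuotient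
        (Ideal.span {f} • (⊤ : Submodule (PowerSeries ℤ_[p])
          (⨁ j, PowerSeries ℤ_[p] ⧸ Ideal.span {g j})))) := by
  classical
  -- `E/fE` is finite
  have hfinE : Finite (@HasQuotient.Quotient (⨁ j, PowerSeries ℤ_[p] ⧸ Ideal.span {g j}) _ Submodule.hasQuotient
      (Ideal.span {f} • (⊤ : Submodule (PowerSeries ℤ_[p])
        (⨁ j, PowerSeries ℤ_[p] ⧸ Ideal.span {g j})))) :=
    finE β γ hγ hβγ f hfin
  -- each component quotient `Λ/(g j, f)` is finite
  have hcompfin : ∀ j, Finite (PowerSeries ℤ_[p] ⧸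
      (Ideal.span {g j} ⊔ Ideal.span {f})) := by
    intro j
    have hle : (Ideal.span {f} • (⊤ : Submodule (PowerSeries ℤ_[p])
        (⨁ j, PowerSeries ℤ_[p] ⧸ Ideal.span {g j}))) ≤
        Submodule.comap (DirectSum.component (PowerSeries ℤ_[p]) ι _ j)
          (Ideal.span {f} • ⊤) :=
      Submodule.smul_le.2 fun r hr m _ => by
        simp only [Submodule.mem_comap, map_smul]
        exact Submodule.smul_mem_smul hr trivial
    have hsurj1 : Function.Surjective (Submodule.mapQ (R := PowerSeries ℤ_[p]) (R₂ := PowerSeries ℤ_[p]) (τ₁₂ := RingHom.id _) (M := ⨁ j, PowerSeries ℤ_[p] ⧸ Ideal.span {g j}) (M₂ := PowerSeries ℤ_[p] ⧸ Ideal.span {g j}) _ _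
        (DirectSum.component (PowerSeries ℤ_[p]) ι _ j) hle) := by
      intro y
      obtain ⟨m, rfl⟩ := Submodule.Quotient.mk_surjective _ y
      refine ⟨Submodule.Quotient.mk (DirectSum.lof (PowerSeries ℤ_[p]) ι _ j m), ?_⟩
      rw [Submodule.mapQ_apply, DirectSum.component.lof_self]
    have h1 : Finite ((PowerSeries ℤ_[p] ⧸ Ideal.span {g j}) ⧸
        (Ideal.span {f} • (⊤ : Submodule (PowerSeries ℤ_[p])
          (PowerSeries ℤ_[p] ⧸ Ideal.span {g j})))) :=
      Finite.of_surjective _ hsurj1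
    have hmap : Submodule.map (Ideal.span {g j}).mkQ (Ideal.span {g j} ⊔ Ideal.span {f})
        = Ideal.span {f} • (⊤ : Submodule (PowerSeries ℤ_[p])
          (PowerSeries ℤ_[p] ⧸ Ideal.span {g j})) := by
      rw [Submodule.map_sup, Submodule.mkQ_map_self, bot_sup_eq]
      apply le_antisymm
      · rintro _ ⟨r, hr, rfl⟩
        have : (Ideal.span {g j}).mkQ r = r • Submodule.Quotient.mk 1 := by
          rw [Submodule.mkQ_apply, ← Submodule.Quotient.mk_smul, smul_eq_mul, mul_one]
        rw [this]
        exact Submodule.smul_mem_smul hr trivial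
      · refine Submodule.smul_le.2 fun r hr m _ => ?_
        obtain ⟨z, rfl⟩ := Submodule.Quotient.mk_surjective _ m
        refine ⟨r * z, Ideal.mul_mem_right _ _ hr, ?_⟩
        rw [Submodule.mkQ_apply, ← Submodule.Quotient.mk_smul, smul_eq_mul]
    have e := Submodule.quotientQuotientEquivQuotient
      (Ideal.span {g j}) (Ideal.span {g j} ⊔ Ideal.span {f}) le_sup_left
    rw [hmap] at e
    exact Finite.of_equiv _ e.toEquiv
  -- `f` acts injectively on `E`
  have hfE : ∀ e : (⨁ j, PowerSeries ℤ_[p] ⧸ Ideal.span {g j}), f • e = 0 → e = 0 := by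
    intro e he
    have hcomp : ∀ (j) (y : PowerSeries ℤ_[p] ⧸ Ideal.span {g j}), f • y = 0 → y = 0 := by
      intro j y hy
      obtain ⟨x, rfl⟩ := Submodule.Quotient.mk_surjective _ y
      rw [← Submodule.Quotient.mk_smul, Submodule.Quotient.mk_eq_zero] at hy
      rw [Submodule.Quotient.mk_eq_zero]
      have hx : f * x ∈ Ideal.span {g j} := by rwa [smul_eq_mul] at hy
      exact component_inj (g j) f (hg j) (hcompfin j) hx
    refine DFinsupp.ext fun j => ?_
    have : (f • e) j = f • (e j) := DFinsupp.smul_apply f e j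
    rw [he] at this
    exact hcomp j (e j) (by rw [← this]; rfl)
  exact abstract_main (R := PowerSeries ℤ_[p]) α β γ hα hγ hαβ hβγ f (fun e he => hfE e he)
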